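/- Let p ∈ (0,1) and let L^1, …, L^n : ℝ^d → ℝ be convex functions. Then the superquantile objective f(w) = Q̄_p(L^1(w),…,L^n(w)) is a convex function of w ∈ ℝ^d. -/

import Mathlib

open Finset MeasureTheory

/-- Empirical `p`-quantile of `u ∈ ℝⁿ`:
`Q_p(u) = inf {t : #{i : u i ≤ t} ≥ p·n}`. -/
noncomputable def empQuantile {n : ℕ} (p : ℝ) (u : Fin n → ℝ) : ℝ :=
  sInf {t : ℝ | p * n ≤ ((Finset.univ.filter fun i => u i ≤ t).card : ℝ)}

/-- Empirical `p`-superquantile of `u ∈ ℝⁿ`: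
`Q̄_p(u) = (1/(1-p)) ∫_p^1 Q_s(u) ds`. -/
noncomputable def supQuantile {n : ℕ} (p : ℝ) (u : Fin n → ℝ) : ℝ :=
  (1 - p)⁻¹ * ∫ s in p..1, empQuantile s u

namespace SupQuantileAux

variable {n : ℕ}

lemma qset_nonempty (hn : 1 ≤ n) (u : Fin n → ℝ) {s : ℝ} (hs : s ≤ 1) :
    {t : ℝ | s * n ≤ ((Finset.univ.filter fun i => u i ≤ t).card : ℝ)}.Nonempty := by
  have hne : (Finset.univ : Finset (Fin n)).Nonempty := ⟨⟨0, hn⟩, Finset.mem_univ _⟩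
  refine ⟨Finset.univ.sup' hne u, ?_⟩
  have h : (Finset.univ.filter fun i => u i ≤ Finset.univ.sup' hne u) = Finset.univ :=
    Finset.filter_true_of_mem fun i _ => Finset.le_sup' u (Finset.mem_univ i)
  simp only [Set.mem_setOf_eq, h, Finset.card_univ, Fintype.card_fin]
  nlinarith [Nat.cast_nonneg (α := ℝ) n]

lemma qset_bddBelow (u : Fin n → ℝ) {s : ℝ} (hs : 0 < s) (hn : 1 ≤ n) :
    BddBelow {t : ℝ | s * n ≤ ((Finset.univ.filter fun i => u i ≤ t).card : ℝ)} := by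
  have hne : (Finset.univ : Finset (Fin n)).Nonempty := ⟨⟨0, hn⟩, Finset.mem_univ _⟩
  refine ⟨Finset.univ.inf' hne u, fun t ht => ?_⟩
  simp only [Set.mem_setOf_eq] at ht
  have hn0 : (0:ℝ) < n := by exact_mod_cast hn
  have hpos : (0:ℝ) < ((Finset.univ.filter fun i => u i ≤ t).card : ℝ) :=
    lt_of_lt_of_le (by positivity) ht
  have : (Finset.univ.filter fun i => u i ≤ t).Nonempty := by
    rw [← Finset.card_pos]; exact_mod_cast hpos
  obtain ⟨i, hi⟩ := this
  simp only [Finset.mem_filter] at hi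
  exact le_trans (Finset.inf'_le u (Finset.mem_univ i)) hi.2

lemma empQuantile_eq (u : Fin n → ℝ) {s : ℝ} (k : Fin n)
    (h1 : (k : ℝ) < s * n) (h2 : s * n ≤ (k : ℝ) + 1) :
    empQuantile s u = u (Tuple.sort u k) := by
  have hmono := Tuple.monotone_sort u
  set y : Fin n → ℝ := u ∘ Tuple.sort u with hy
  have hset : {t : ℝ | s * n ≤ ((Finset.univ.filter fun i => u i ≤ t).card : ℝ)}
      = Set.Ici (y k) := by
    ext t
    simp only [Set.mem_setOf_eq, Set.mem_Ici]
    constructor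
    · intro ht
      by_contra hlt
      push_neg at hlt
      have hcard : ((Finset.univ.filter fun i => u i ≤ t)).card ≤ (Finset.Iio k).card := by
        refine Finset.card_le_card_of_injOn (fun i => (Tuple.sort u).symm i) ?_ ?_
        · intro i hi
          simp only [Finset.mem_coe, Finset.mem_filter, Finset.mem_univ, true_and] at hi
          rw [Finset.mem_coe, Finset.mem_Iio]
          by_contra hge
          push_neg at hge
          have h' : y k ≤ y ((Tuple.sort u).symm i) := hmono hge
          have heq : y ((Tuple.sort u).symm i) = u i := by
            simp [hy, Function.comp]
          rw [heq] at h'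
          linarith
        · exact fun a _ b _ hab => (Tuple.sort u).symm.injective hab
      rw [Fin.card_Iio] at hcard
      have : ((Finset.univ.filter fun i => u i ≤ t).card : ℝ) ≤ (k : ℝ) := by
        exact_mod_cast hcard
      linarith
    · intro hle
      have hcard : (Finset.Iic k).card ≤ ((Finset.univ.filter fun i => u i ≤ t)).card := by
        refine Finset.card_le_card_of_injOn (fun j => Tuple.sort u j) ?_ ?_
        · intro j hj
          rw [Finset.mem_coe, Finset.mem_Iic] at hj
          simp only [Finset.mem_coe, Finset.mem_filter, Finset.mem_univ, true_and]
          have h' : y j ≤ y k := hmono hj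
          have h'' : u (Tuple.sort u j) ≤ y k := h'
          linarith
        · exact fun a _ b _ hab => (Tuple.sort u).injective hab
      rw [Fin.card_Iic] at hcard
      have : ((k : ℝ) + 1) ≤ ((Finset.univ.filter fun i => u i ≤ t).card : ℝ) := by
        exact_mod_cast hcard
      linarith
  rw [empQuantile, hset, csInf_Ici]
  rfl

lemma empQuantile_mono_s (hn : 1 ≤ n) (u : Fin n → ℝ) {s s' : ℝ}
    (hs : 0 < s) (hss' : s ≤ s') (hs' : s' ≤ 1) :
    empQuantile s u ≤ empQuantile s' u := by
  refine csInf_le_csInf (qset_bddBelow u hs hn) (qset_nonempty hn u hs') ?_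
  intro t ht
  simp only [Set.mem_setOf_eq] at ht ⊢
  have : s * n ≤ s' * n := by
    have : (0:ℝ) ≤ n := Nat.cast_nonneg n
    nlinarith
  linarith

lemma empQuantile_mono_u (hn : 1 ≤ n) {u v : Fin n → ℝ} (huv : ∀ i, u i ≤ v i) {s : ℝ}
    (hs : 0 < s) (hs' : s ≤ 1) :
    empQuantile s u ≤ empQuantile s v := by
  refine csInf_le_csInf (qset_bddBelow u hs hn) (qset_nonempty hn v hs') ?_
  intro t ht
  simp only [Set.mem_setOf_eq] at ht ⊢
  refine le_trans ht ?_
  have : (Finset.univ.filter fun i => v i ≤ t) ⊆ (Finset.univ.filter fun i => u i ≤ t) := by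
    intro i hi
    simp only [Finset.mem_filter, Finset.mem_univ, true_and] at hi ⊢
    exact le_trans (huv i) hi
  exact_mod_cast Finset.card_le_card this

lemma empQuantile_intble (hn : 1 ≤ n) (u : Fin n → ℝ) {a b : ℝ}
    (ha : 0 < a) (hab : a ≤ b) (hb : b ≤ 1) :
    IntervalIntegrable (fun s => empQuantile s u) volume a b := by
  refine MonotoneOn.intervalIntegrable ?_
  rw [Set.uIcc_of_le hab]
  intro x hx y hy hxy
  exact empQuantile_mono_s hn u (lt_of_lt_of_le ha hx.1) hxy (le_trans hy.2 hb)

lemma integral_piece (u : Fin n → ℝ) (k : Fin n) {a b : ℝ}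
    (ha : (k : ℝ) / n ≤ a) (hab : a ≤ b) (hb : b ≤ ((k : ℝ) + 1) / n) :
    ∫ s in a..b, empQuantile s u = (b - a) * u (Tuple.sort u k) := by
  have hn0 : (0:ℝ) < n := by
    have hk := k.2
    have : 0 < n := by omega
    exact_mod_cast this
  rw [intervalIntegral.integral_congr_ae (g := fun _ => u (Tuple.sort u k)) ?_]
  · rw [intervalIntegral.integral_const, smul_eq_mul]
  · refine MeasureTheory.ae_of_all _ ?_
    intro s hs
    rw [Set.uIoc_of_le hab] at hs
    refine empQuantile_eq u k ?_ ?_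
    · have : (k:ℝ)/n < s := lt_of_le_of_lt ha hs.1
      calc (k:ℝ) = ((k:ℝ)/n) * n := by field_simp
      _ < s * n := by nlinarith
    · have : s ≤ ((k:ℝ)+1)/n := le_trans hs.2 hb
      calc s * n ≤ (((k:ℝ)+1)/n) * n := by nlinarith
      _ = (k:ℝ) + 1 := by field_simp

lemma integral_tail (hn : 1 ≤ n) (u : Fin n → ℝ) :
    ∀ t : ℕ, t + 1 ≤ n →
    ∫ s in (((n - t : ℕ) : ℝ)/n)..1, empQuantile s u
      = ∑ k ∈ Finset.univ.filter (fun k : Fin n => n - t ≤ (k:ℕ)),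
          (1/(n:ℝ)) * u (Tuple.sort u k) := by
  have hn0 : (0:ℝ) < n := by exact_mod_cast hn
  intro t
  induction t with
  | zero =>
    intro _
    have h1 : ((n - 0 : ℕ) : ℝ)/n = 1 := by
      simp only [Nat.sub_zero]; field_simp
    have h2 : (Finset.univ.filter (fun k : Fin n => n - 0 ≤ (k:ℕ))) = ∅ := by
      ext k; simp only [Finset.mem_filter, Finset.mem_univ, true_and, Finset.notMem_empty,
        iff_false]
      have := k.2; omega
    rw [h1, h2, intervalIntegral.integral_same, Finset.sum_empty]
  | succ t ih =>
    intro ht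
    have ih' := ih (by omega)
    set j : ℕ := n - (t+1) with hj
    have hjn : j < n := by omega
    have hj1 : 1 ≤ j := by omega
    have hsucc : n - t = j + 1 := by omega
    have hja : (0:ℝ) < (j:ℝ)/n := by positivity
    have hjb : ((j:ℝ))/n ≤ ((j:ℝ)+1)/n := by
      gcongr
      linarith
    have hjc : ((j:ℝ)+1)/n ≤ 1 := by
      rw [div_le_one hn0]
      have : (j:ℝ) + 1 ≤ (n:ℝ) := by exact_mod_cast hjn
      linarith
    have hint1 : IntervalIntegrable (fun s => empQuantile s u) volume ((j:ℝ)/n) (((j:ℝ)+1)/n) :=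
      empQuantile_intble hn u hja hjb hjc
    have hint2 : IntervalIntegrable (fun s => empQuantile s u) volume (((j:ℝ)+1)/n) 1 :=
      empQuantile_intble hn u (by positivity) hjc le_rfl
    have hsplit := intervalIntegral.integral_add_adjacent_intervals hint1 hint2
    have hcast : ((n - t : ℕ) : ℝ) = (j:ℝ) + 1 := by
      rw [hsucc]; push_cast; ring
    rw [hcast] at ih'
    have hp1 : ∫ s in ((j:ℝ)/n)..(((j:ℝ)+1)/n), empQuantile s u
        = (1/(n:ℝ)) * u (Tuple.sort u ⟨j, hjn⟩) := by
      have := integral_piece u ⟨j, hjn⟩ (a := (j:ℝ)/n) (b := ((j:ℝ)+1)/n)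
        le_rfl hjb le_rfl
      rw [this]
      congr 1
      field_simp
      ring
    have hins : (Finset.univ.filter (fun k : Fin n => n - (t+1) ≤ (k:ℕ)))
        = insert ⟨j, hjn⟩ (Finset.univ.filter (fun k : Fin n => n - t ≤ (k:ℕ))) := by
      ext k
      simp only [Finset.mem_filter, Finset.mem_univ, true_and, Finset.mem_insert]
      constructor
      · intro hk
        rcases eq_or_lt_of_le hk with h | h
        · left; exact Fin.ext h.symm
        · right; omega
      · rintro (rfl | hk)
        · simp only [Fin.val_mk]; omega
        · omega
    have hnotmem : (⟨j, hjn⟩ : Fin n) ∉ (Finset.univ.filter (fun k : Fin n => n - t ≤ (k:ℕ))) := by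
      simp only [Finset.mem_filter, Finset.mem_univ, true_and, Fin.val_mk]
      omega
    rw [hins, Finset.sum_insert hnotmem, ← ih', ← hp1, ← hsplit]

variable {p : ℝ}

lemma k0_pos (hn : 1 ≤ n) (hp0 : 0 < p) : 1 ≤ ⌈p * n⌉₊ := by
  have hn0 : (0:ℝ) < n := by exact_mod_cast hn
  have : (0:ℝ) < p * n := by positivity
  exact Nat.one_le_ceil_iff.mpr this

lemma k0_le (hn : 1 ≤ n) (hp1 : p < 1) : ⌈p * n⌉₊ ≤ n := by
  have hn0 : (0:ℝ) < n := by exact_mod_cast hn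
  refine Nat.ceil_le.mpr ?_
  nlinarith

lemma p_le_k0 (hn : 1 ≤ n) (hp0 : 0 < p) : p ≤ (⌈p * n⌉₊ : ℝ) / n := by
  have hn0 : (0:ℝ) < n := by exact_mod_cast hn
  rw [le_div_iff₀ hn0]
  exact Nat.le_ceil _

lemma k0_lt_p (hn : 1 ≤ n) (hp0 : 0 < p) : ((⌈p * n⌉₊ : ℝ) - 1) / n < p := by
  have hn0 : (0:ℝ) < n := by exact_mod_cast hn
  rw [div_lt_iff₀ hn0]
  have h1 := k0_pos hn hp0
  have := Nat.ceil_lt_add_one (le_of_lt (by positivity : (0:ℝ) < p * n))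
  linarith

lemma integral_full (hn : 1 ≤ n) (hp0 : 0 < p) (hp1 : p < 1) (u : Fin n → ℝ) :
    ∫ s in p..1, empQuantile s u
      = ((⌈p * n⌉₊ : ℝ)/n - p) * u (Tuple.sort u ⟨⌈p * n⌉₊ - 1, by
          have := k0_pos hn hp0; have := k0_le hn hp1; omega⟩)
        + ∑ k ∈ Finset.univ.filter (fun k : Fin n => ⌈p * n⌉₊ ≤ (k:ℕ)),
          (1/(n:ℝ)) * u (Tuple.sort u k) := by
  have hn0 : (0:ℝ) < n := by exact_mod_cast hn
  set k₀ : ℕ := ⌈p * n⌉₊ with hk0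
  have h1 : 1 ≤ k₀ := k0_pos hn hp0
  have h2 : k₀ ≤ n := k0_le hn hp1
  have hm : k₀ - 1 < n := by omega
  set m : Fin n := ⟨k₀ - 1, hm⟩ with hmdef
  have hpk : p ≤ (k₀ : ℝ)/n := p_le_k0 hn hp0
  have hk1 : (k₀:ℝ)/n ≤ 1 := by
    rw [div_le_one hn0]; exact_mod_cast h2
  have hint1 : IntervalIntegrable (fun s => empQuantile s u) volume p ((k₀:ℝ)/n) :=
    empQuantile_intble hn u hp0 hpk hk1
  have hint2 : IntervalIntegrable (fun s => empQuantile s u) volume ((k₀:ℝ)/n) 1 :=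
    empQuantile_intble hn u (by positivity) hk1 le_rfl
  rw [← intervalIntegral.integral_add_adjacent_intervals hint1 hint2]
  have hmv : ((m:ℕ) : ℝ) = (k₀:ℝ) - 1 := by
    simp only [hmdef, Fin.val_mk]
    push_cast [Nat.cast_sub h1]
    ring
  have hfirst : ∫ s in p..((k₀:ℝ)/n), empQuantile s u = ((k₀:ℝ)/n - p) * u (Tuple.sort u m) := by
    refine integral_piece u m ?_ hpk ?_
    · rw [hmv]
      exact le_of_lt (k0_lt_p hn hp0)
    · rw [hmv]
      gcongr <;> linarith
  have hsecond : ∫ s in ((k₀:ℝ)/n)..1, empQuantile s u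
      = ∑ k ∈ Finset.univ.filter (fun k : Fin n => k₀ ≤ (k:ℕ)),
          (1/(n:ℝ)) * u (Tuple.sort u k) := by
    have := integral_tail hn u (n - k₀) (by omega)
    have hc : n - (n - k₀) = k₀ := by omega
    rw [hc] at this
    exact this
  rw [hfirst, hsecond]

/-- The weight function. -/
noncomputable def cw (p : ℝ) (n : ℕ) (k : Fin n) : ℝ :=
  (if (k:ℕ) + 1 = ⌈p * n⌉₊ then ((⌈p * n⌉₊ : ℝ)/n - p) else 0)
    + (if ⌈p * n⌉₊ ≤ (k:ℕ) then (1/(n:ℝ)) else 0)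

lemma cw_mono (hn : 1 ≤ n) (hp0 : 0 < p) (hp1 : p < 1) : Monotone (cw p n) := by
  have hn0 : (0:ℝ) < n := by exact_mod_cast hn
  have hd0 : 0 ≤ (⌈p * n⌉₊ : ℝ)/n - p := by linarith [p_le_k0 hn hp0]
  have hd1 : (⌈p * n⌉₊ : ℝ)/n - p ≤ 1/n := by
    have := k0_lt_p hn hp0
    rw [div_lt_iff₀ hn0] at this
    rw [sub_le_iff_le_add, div_le_iff₀ hn0]
    have h2 : (1/(n:ℝ) + p) * n = 1 + p * n := by field_simp
    rw [h2]
    linarith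
  intro k k' hkk'
  have hkk : (k:ℕ) ≤ (k':ℕ) := hkk'
  unfold cw
  split_ifs with h1 h2 h3 h4 h5 h6 h7 <;>
    first
      | linarith
      | (exfalso; omega)

lemma sum_cw (hn : 1 ≤ n) (hp0 : 0 < p) (hp1 : p < 1)
    (hm : ⌈p * n⌉₊ - 1 < n) (y : Fin n → ℝ) :
    ∑ k, cw p n k * y k
      = ((⌈p * n⌉₊ : ℝ)/n - p) * y ⟨⌈p * n⌉₊ - 1, hm⟩
        + ∑ k ∈ Finset.univ.filter (fun k : Fin n => ⌈p * n⌉₊ ≤ (k:ℕ)), (1/(n:ℝ)) * y k := by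
  have h1 : 1 ≤ ⌈p * n⌉₊ := by
    have hn0 : (0:ℝ) < n := by exact_mod_cast hn
    exact Nat.one_le_ceil_iff.mpr (by positivity)
  unfold cw
  rw [Finset.sum_congr rfl (fun k _ => add_mul _ _ _), Finset.sum_add_distrib]
  congr 1
  · rw [Finset.sum_eq_single (⟨⌈p * n⌉₊ - 1, hm⟩ : Fin n)]
    · simp only [Fin.val_mk]
      rw [if_pos (by omega)]
    · intro k _ hk
      rw [if_neg, zero_mul]
      intro hcon
      exact hk (Fin.ext (by simp only [Fin.val_mk]; omega))
    · intro h; exact absurd (Finset.mem_univ _) h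
  · rw [Finset.sum_filter]
    refine Finset.sum_congr rfl fun k _ => ?_
    split_ifs <;> simp

/-- `∫ s in p..1, Q_s(u) ds` as a weighted sum of the order statistics of `u`. -/
lemma integral_eq_sum_cw (hn : 1 ≤ n) (hp0 : 0 < p) (hp1 : p < 1) (u : Fin n → ℝ) :
    ∫ s in p..1, empQuantile s u = ∑ k, cw p n k * u (Tuple.sort u k) := by
  have hm : ⌈p * n⌉₊ - 1 < n := by
    have := k0_pos hn hp0; have := k0_le hn hp1; omega
  rw [integral_full hn hp0 hp1 u, sum_cw hn hp0 hp1 hm]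

lemma sum_perm_le (c : Fin n → ℝ) (hc : Monotone c) (v : Fin n → ℝ) (σ : Equiv.Perm (Fin n)) :
    ∑ k, c k * v (σ k) ≤ ∑ k, c k * v (Tuple.sort v k) := by
  have hmono : Monovary c (v ∘ Tuple.sort v) := hc.monovary (Tuple.monotone_sort v)
  have h := hmono.sum_mul_comp_perm_le_sum_mul (σ := σ.trans (Tuple.sort v).symm)
  simpa [Function.comp, Equiv.apply_symm_apply] using h

/-- Convexity of the integral functional. -/
lemma integral_convex (hn : 1 ≤ n) (hp0 : 0 < p) (hp1 : p < 1) (u v : Fin n → ℝ)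
    {a b : ℝ} (ha : 0 ≤ a) (hb : 0 ≤ b) (hab : a + b = 1) :
    ∫ s in p..1, empQuantile s (fun i => a * u i + b * v i)
      ≤ a * (∫ s in p..1, empQuantile s u) + b * (∫ s in p..1, empQuantile s v) := by
  set z : Fin n → ℝ := fun i => a * u i + b * v i with hz
  set σ := Tuple.sort z with hσ
  rw [integral_eq_sum_cw hn hp0 hp1 z, integral_eq_sum_cw hn hp0 hp1 u,
    integral_eq_sum_cw hn hp0 hp1 v]
  have hc := cw_mono hn hp0 hp1
  have hexp : ∑ k, cw p n k * z (σ k)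
      = a * (∑ k, cw p n k * u (σ k)) + b * (∑ k, cw p n k * v (σ k)) := by
    rw [Finset.mul_sum, Finset.mul_sum, ← Finset.sum_add_distrib]
    refine Finset.sum_congr rfl fun k _ => ?_
    simp only [hz]
    ring
  rw [hexp]
  have h1 := sum_perm_le (cw p n) hc u σ
  have h2 := sum_perm_le (cw p n) hc v σ
  have := mul_le_mul_of_nonneg_left h1 ha
  have := mul_le_mul_of_nonneg_left h2 hb
  linarith

/-- Monotonicity of the integral functional. -/
lemma integral_mono (hn : 1 ≤ n) (hp0 : 0 < p) (hp1 : p < 1) {u v : Fin n → ℝ}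
    (huv : ∀ i, u i ≤ v i) :
    ∫ s in p..1, empQuantile s u ≤ ∫ s in p..1, empQuantile s v := by
  refine intervalIntegral.integral_mono_on (le_of_lt hp1)
    (empQuantile_intble hn u hp0 (le_of_lt hp1) le_rfl)
    (empQuantile_intble hn v hp0 (le_of_lt hp1) le_rfl) ?_
  intro s hs
  exact empQuantile_mono_u hn huv (lt_of_lt_of_le hp0 hs.1) hs.2

end SupQuantileAux

/-- If the losses `L^i : ℝ^d → ℝ` are convex, then the superquantile objective
`w ↦ Q̄_p(L^1(w), …, L^n(w))` is convex. -/
theorem stmt4 {n d : ℕ} (hn : 1 ≤ n) (p : ℝ) (hp0 : 0 < p) (hp1 : p < 1)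
    (L : Fin n → (Fin d → ℝ) → ℝ) (hL : ∀ i, ConvexOn ℝ Set.univ (L i)) :
    ConvexOn ℝ Set.univ (fun w : Fin d → ℝ => supQuantile p (fun i => L i w)) := by
  refine ⟨convex_univ, ?_⟩
  intro w1 _ w2 _ a b ha hb hab
  simp only [supQuantile, smul_eq_mul]
  have hinv : 0 ≤ (1 - p)⁻¹ := by
    have : 0 < 1 - p := by linarith
    positivity
  have key : ∫ s in p..1, empQuantile s (fun i => L i (a • w1 + b • w2))
      ≤ a * (∫ s in p..1, empQuantile s (fun i => L i w1))
        + b * (∫ s in p..1, empQuantile s (fun i => L i w2)) := by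
    have hmono : ∀ i, L i (a • w1 + b • w2) ≤ a * L i w1 + b * L i w2 := by
      intro i
      have := (hL i).2 (Set.mem_univ w1) (Set.mem_univ w2) ha hb hab
      simpa [smul_eq_mul] using this
    calc ∫ s in p..1, empQuantile s (fun i => L i (a • w1 + b • w2))
        ≤ ∫ s in p..1, empQuantile s (fun i => a * L i w1 + b * L i w2) :=
          SupQuantileAux.integral_mono hn hp0 hp1 hmono
      _ ≤ a * (∫ s in p..1, empQuantile s (fun i => L i w1))
          + b * (∫ s in p..1, empQuantile s (fun i => L i w2)) :=
          SupQuantileAux.integral_convex hn hp0 hp1 _ _ ha hb hab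
  calc (1 - p)⁻¹ * ∫ s in p..1, empQuantile s (fun i => L i (a • w1 + b • w2))
      ≤ (1 - p)⁻¹ * (a * (∫ s in p..1, empQuantile s (fun i => L i w1))
        + b * (∫ s in p..1, empQuantile s (fun i => L i w2))) :=
        mul_le_mul_of_nonneg_left key hinv
    _ = a * ((1 - p)⁻¹ * ∫ s in p..1, empQuantile s (fun i => L i w1))
        + b * ((1 - p)⁻¹ * ∫ s in p..1, empQuantile s (fun i => L i w2)) := by ring
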